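/- Let k be a field of characteristic zero, V a finite-dimensional k-vector space, and D a double Poisson bracket on the tensor algebra T(V) which is linear, i.e. D(a,b) ∈ k·1⊗V + V⊗k·1 for all a,b ∈ V. Then there exists a unique bilinear map μ : V×V → V such that D(a,b) = 1⊗μ(a,b) − μ(b,a)⊗1 for all a,b ∈ V, and μ is an associative multiplication on V. -/

import Mathlib

open TensorProduct

noncomputable section

namespace DoubleBrackets

variable (k : Type*) [Field k] (A : Type*) [Ring A] [Algebra k A]

/-- The flip `τ : A ⊗ A → A ⊗ A`, `x ⊗ y ↦ y ⊗ x`. -/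
def tau : (A ⊗[k] A) →ₗ[k] (A ⊗[k] A) := (TensorProduct.comm k A A).toLinearMap

/-- `(123)·(x⊗y⊗z) = z⊗x⊗y`. -/
def p123 : (A ⊗[k] (A ⊗[k] A)) →ₗ[k] (A ⊗[k] (A ⊗[k] A)) :=
  (TensorProduct.comm k (A ⊗[k] A) A).toLinearMap ∘ₗ (TensorProduct.assoc k A A A).symm.toLinearMap

/-- `(132)·(x⊗y⊗z) = y⊗z⊗x`. -/
def p132 : (A ⊗[k] (A ⊗[k] A)) →ₗ[k] (A ⊗[k] (A ⊗[k] A)) :=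
  (TensorProduct.assoc k A A A).toLinearMap ∘ₗ (TensorProduct.comm k A (A ⊗[k] A)).toLinearMap

/-- For a bilinear map `D : A × A → A ⊗ A` and `a ∈ A`, the map
`x ⊗ y ↦ D(a,x) ⊗ y : A ⊗ A → A ⊗ A ⊗ A`, used to form `D(a, D'(b,c)) ⊗ D''(b,c)`. -/
def applyLeft (D : A →ₗ[k] (A →ₗ[k] (A ⊗[k] A))) (a : A) :
    (A ⊗[k] A) →ₗ[k] (A ⊗[k] (A ⊗[k] A)) :=
  (TensorProduct.assoc k A A A).toLinearMap ∘ₗ TensorProduct.map (D a) LinearMap.id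

/-- The double Jacobiator
`Jac_D(a,b,c) = D(a,D'(b,c))⊗D''(b,c) + (123)·(D(b,D'(c,a))⊗D''(c,a)) + (132)·(D(c,D'(a,b))⊗D''(a,b))`. -/
def Jac (D : A →ₗ[k] (A →ₗ[k] (A ⊗[k] A))) (a b c : A) : A ⊗[k] (A ⊗[k] A) :=
  applyLeft k A D a (D b c)
    + p123 k A (applyLeft k A D b (D c a))
    + p132 k A (applyLeft k A D c (D a b))

/-- `D` is a double bracket: skew-symmetry `D(a,b) = -τ D(b,a)` and the outer Leibniz rule
`D(a,bc) = D'(a,b) ⊗ D''(a,b)c + bD'(a,c) ⊗ D''(a,c)`. -/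
def IsDoubleBracket (D : A →ₗ[k] (A →ₗ[k] (A ⊗[k] A))) : Prop :=
  (∀ a b : A, D a b = - tau k A (D b a)) ∧
  (∀ a b c : A, D a (b * c) =
      TensorProduct.map LinearMap.id (LinearMap.mulRight k c) (D a b)
      + TensorProduct.map (LinearMap.mulLeft k b) LinearMap.id (D a c))

/-- `D` is a double Poisson bracket: a double bracket with vanishing double Jacobiator. -/
def IsDoublePoissonBracket (D : A →ₗ[k] (A →ₗ[k] (A ⊗[k] A))) : Prop :=
  IsDoubleBracket k A D ∧ ∀ a b c : A, Jac k A D a b c = 0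

end DoubleBrackets

open DoubleBrackets TensorAlgebra

namespace LDPBAux


variable (k : Type*) [Field k] (V : Type*) [AddCommGroup V] [Module k V]

def εl : TensorAlgebra k V →ₗ[k] k := (TensorAlgebra.algebraMapInv).toLinearMap

@[simp] lemma εl_one : εl k V (1 : TensorAlgebra k V) = 1 := map_one TensorAlgebra.algebraMapInv

@[simp] lemma εl_ι (x : V) : εl k V (TensorAlgebra.ι k x) = 0 :=
  TensorAlgebra.lift_ι_apply _ _

@[simp] lemma ιInv_one : TensorAlgebra.ιInv (1 : TensorAlgebra k V) = 0 := by
  simp [TensorAlgebra.ιInv]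
  letI : Module kᵐᵒᵖ V := Module.compHom _ ((RingHom.id k).fromOpposite mul_comm)
  haveI : IsCentralScalar k V := ⟨fun r m => rfl⟩
  exact (congrArg TrivSqZeroExt.snd (map_one (TensorAlgebra.toTrivSqZeroExt (R := k) (M := V)))).trans TrivSqZeroExt.snd_one

@[simp] lemma ιInv_ι (x : V) : TensorAlgebra.ιInv (TensorAlgebra.ι k x) = x :=
  TensorAlgebra.ι_leftInverse x

def F : (TensorAlgebra k V ⊗[k] TensorAlgebra k V) →ₗ[k] V :=
  (TensorProduct.lid k V).toLinearMap ∘ₗ TensorProduct.map (εl k V) TensorAlgebra.ιInv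

@[simp] lemma F_tmul (x y : TensorAlgebra k V) :
    F k V (x ⊗ₜ[k] y) = εl k V x • TensorAlgebra.ιInv y := by
  simp [F]

def ε2 : (TensorAlgebra k V ⊗[k] TensorAlgebra k V) →ₗ[k] k :=
  (TensorProduct.lid k k).toLinearMap ∘ₗ TensorProduct.map (εl k V) (εl k V)

@[simp] lemma ε2_tmul (x y : TensorAlgebra k V) :
    ε2 k V (x ⊗ₜ[k] y) = εl k V x * εl k V y := by
  simp [ε2, smul_eq_mul, mul_comm]

def G : (TensorAlgebra k V ⊗[k] (TensorAlgebra k V ⊗[k] TensorAlgebra k V)) →ₗ[k] V :=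
  (TensorProduct.rid k V).toLinearMap ∘ₗ TensorProduct.map TensorAlgebra.ιInv (ε2 k V)

@[simp] lemma G_tmul (x : TensorAlgebra k V) (y : TensorAlgebra k V ⊗[k] TensorAlgebra k V) :
    G k V (x ⊗ₜ[k] y) = ε2 k V y • TensorAlgebra.ιInv x := by
  simp [G]

def μofD (D : TensorAlgebra k V →ₗ[k] (TensorAlgebra k V →ₗ[k]
    (TensorAlgebra k V ⊗[k] TensorAlgebra k V))) : V →ₗ[k] (V →ₗ[k] V) :=
  LinearMap.compr₂ (LinearMap.compl₂ (D ∘ₗ TensorAlgebra.ι k) (TensorAlgebra.ι k)) (F k V)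

@[simp] lemma μofD_apply (D) (a b : V) :
    μofD k V D a b = F k V (D (TensorAlgebra.ι k a) (TensorAlgebra.ι k b)) := rfl

end LDPBAux

set_option maxHeartbeats 3200000 in
set_option synthInstance.maxHeartbeats 400000 in
/-- Any linear double Poisson bracket on the tensor algebra `T(V)` is of the form
`{{a,b}} = 1 ⊗ μ(a,b) - μ(b,a) ⊗ 1` for a unique bilinear map `μ`, which is moreover an
associative multiplication on `V`. -/
theorem linear_double_poisson_bracket_classification
    (k : Type*) [Field k] [CharZero k]
    (V : Type*) [AddCommGroup V] [Module k V] [FiniteDimensional k V]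
    (D : TensorAlgebra k V →ₗ[k] (TensorAlgebra k V →ₗ[k]
          (TensorAlgebra k V ⊗[k] TensorAlgebra k V)))
    (hD : IsDoublePoissonBracket k (TensorAlgebra k V) D)
    (hlin : ∀ a b : V, ∃ u v : V,
      D (ι k a) (ι k b) =
        (1 : TensorAlgebra k V) ⊗ₜ[k] ι k u + ι k v ⊗ₜ[k] (1 : TensorAlgebra k V)) :
    ∃ μ : V →ₗ[k] (V →ₗ[k] V),
      (∀ a b : V, D (ι k a) (ι k b) =
        (1 : TensorAlgebra k V) ⊗ₜ[k] ι k (μ a b)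
          - ι k (μ b a) ⊗ₜ[k] (1 : TensorAlgebra k V)) ∧
      (∀ a b c : V, μ (μ a b) c = μ a (μ b c)) ∧
      (∀ μ' : V →ₗ[k] (V →ₗ[k] V),
        (∀ a b : V, D (ι k a) (ι k b) =
          (1 : TensorAlgebra k V) ⊗ₜ[k] ι k (μ' a b)
            - ι k (μ' b a) ⊗ₜ[k] (1 : TensorAlgebra k V)) → μ' = μ) := by
  classical
  set μ := LDPBAux.μofD k V D with hμ
  -- the value μ a b extracted from the linear form of D
  have hval : ∀ a b : V, ∀ u v : V,
      D (ι k a) (ι k b) = (1 : TensorAlgebra k V) ⊗ₜ[k] ι k u + ι k v ⊗ₜ[k] (1 : TensorAlgebra k V) → μ a b = u := by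
    intro a b u v h
    rw [hμ, LDPBAux.μofD_apply, h]
    simp
  -- the formula for D in terms of μ
  have hform : ∀ a b : V, D (ι k a) (ι k b) =
      (1 : TensorAlgebra k V) ⊗ₜ[k] ι k (μ a b) - ι k (μ b a) ⊗ₜ[k] (1 : TensorAlgebra k V) := by
    intro a b
    obtain ⟨u, v, h⟩ := hlin a b
    have hu : μ a b = u := hval a b u v h
    -- skew-symmetry: D (ι b) (ι a) = - τ (D (ι a) (ι b))
    have hba : D (ι k b) (ι k a) =
        -(ι k u ⊗ₜ[k] (1 : TensorAlgebra k V)) - (1 : TensorAlgebra k V) ⊗ₜ[k] ι k v := by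
      rw [hD.1.1 (ι k b) (ι k a), h]
      simp only [map_add, tau, LinearEquiv.coe_coe, TensorProduct.comm_tmul, neg_add]
      abel
    have hv : μ b a = -v := by
      rw [hμ, LDPBAux.μofD_apply, hba]
      simp
    rw [h, hu, hv]
    simp [sub_eq_add_neg, map_neg, TensorProduct.neg_tmul]
  -- D (ι a) 1 = 0
  have hone : ∀ a : TensorAlgebra k V, D a (1 : TensorAlgebra k V) = 0 := by
    intro a
    have h := hD.1.2 a 1 1
    simp only [one_mul, LinearMap.mulLeft_one, LinearMap.mulRight_one,
      TensorProduct.map_id, LinearMap.id_coe, id_eq] at h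
    exact (left_eq_add.mp h)
  -- evaluation of applyLeft on the linear-form elements
  have hAL : ∀ a m1 m2 : V,
      applyLeft k (TensorAlgebra k V) D (ι k a) ((1 : TensorAlgebra k V) ⊗ₜ[k] ι k m1 - ι k m2 ⊗ₜ[k] (1 : TensorAlgebra k V)) =
        -((1 : TensorAlgebra k V) ⊗ₜ[k] (ι k (μ a m2) ⊗ₜ[k] (1 : TensorAlgebra k V)))
          + ι k (μ m2 a) ⊗ₜ[k] ((1 : TensorAlgebra k V) ⊗ₜ[k] (1 : TensorAlgebra k V)) := by
    intro a m1 m2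
    rw [applyLeft]
    set_option maxHeartbeats 2000000 in
    set_option synthInstance.maxHeartbeats 1000000 in
    simp only [LinearMap.coe_comp, Function.comp_apply, map_sub,
      TensorProduct.map_tmul, LinearMap.id_coe, id_eq, hone, hform a m2,
      TensorProduct.sub_tmul, TensorProduct.zero_tmul, map_sub, map_zero,
      LinearEquiv.coe_coe, TensorProduct.assoc_tmul, zero_sub, neg_sub]
    abel
  -- associativity via the Jacobi identity
  have hassoc : ∀ a b c : V, μ (μ c b) a = μ c (μ b a) := by
    intro a b c
    have h0 := hD.2 (ι k a) (ι k b) (ι k c)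
    unfold Jac at h0
    rw [hform b c, hform c a, hform a b, hAL a (μ b c) (μ c b),
      hAL b (μ c a) (μ a c), hAL c (μ a b) (μ b a)] at h0
    have h1 := congrArg (LDPBAux.G k V) h0
    set_option maxHeartbeats 2000000 in
    set_option synthInstance.maxHeartbeats 1000000 in
    simp only [map_add, map_neg, map_zero, p123, p132, LinearMap.coe_comp,
      Function.comp_apply, LinearEquiv.coe_coe, TensorProduct.assoc_symm_tmul,
      TensorProduct.comm_tmul, TensorProduct.assoc_tmul, LDPBAux.G_tmul,
      LDPBAux.ε2_tmul, LDPBAux.εl_one, LDPBAux.εl_ι, LDPBAux.ιInv_one,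
      LDPBAux.ιInv_ι, one_mul, mul_one, zero_mul, mul_zero, one_smul, zero_smul,
      smul_zero, neg_zero, add_zero, zero_add] at h1
    have h2 : μ (μ c b) a - μ c (μ b a) = 0 := by
      rw [sub_eq_add_neg]; exact h1
    exact sub_eq_zero.mp h2
  refine ⟨μ, hform, fun a b c => hassoc c b a, ?_⟩
  intro μ' hμ'
  ext a b
  have h := (hμ' a b).symm.trans (hform a b)
  have h2 := congrArg (LDPBAux.F k V) h
  simpa using h2
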